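/- Let G1, G2, Δ be n×n real matrices with ‖Δ‖_op ≤ ε. Then |Tr(G1 Δ G2 Δᵀ)| ≤ ε² Σ_{i=1}^n σ_i(G1) σ_i(G2), where σ_i denotes the i-th largest singular value. -/

import Mathlib

open Matrix

section Helpers

open Finset

private lemma ite_sum_range' {n k : ℕ} (hk : k < n) (x : ℕ → ℝ) :
    ∑ i ∈ Finset.range n, (if i ≤ k then x i else 0) = ∑ i ∈ Finset.range (k+1), x i := by
  rw [← Finset.sum_filter]
  congr 1
  ext i; simp only [mem_filter, mem_range]; omega

private lemma tele' {n : ℕ} (f : ℕ → ℝ) (hfn : f n = 0) (i : ℕ) (hi : i ≤ n) :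
    ∑ k ∈ Finset.Ico i n, (f k - f (k+1)) = f i := by
  rw [Finset.sum_Ico_eq_sum_range]
  simp only [Nat.add_assoc]
  rw [Finset.sum_range_sub' (fun j => f (i + j))]
  simp [Nat.add_sub_cancel' hi, hfn]

private lemma expand_f' {n : ℕ} (f : ℕ → ℝ) (hfn : f n = 0) (hf : ∀ i, n ≤ i → f i = 0)
    (i : ℕ) :
    f i = ∑ k ∈ Finset.range n, (if i ≤ k then (f k - f (k+1)) else 0) := by
  rw [← Finset.sum_filter]
  by_cases hi : i ≤ n
  · have : (Finset.range n).filter (fun k => i ≤ k) = Finset.Ico i n := by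
      ext k; simp only [mem_filter, mem_range, mem_Ico]; omega
    rw [this, tele' f hfn i hi]
  · rw [hf i (by omega)]
    have : (Finset.range n).filter (fun k => i ≤ k) = ∅ := by
      ext k; simp only [mem_filter, mem_range, Finset.notMem_empty, iff_false]; omega
    simp [this]

private lemma sum4_comm' (s t u v : Finset ℕ) (T : ℕ → ℕ → ℕ → ℕ → ℝ) :
    ∑ i ∈ s, ∑ j ∈ t, ∑ k ∈ u, ∑ l ∈ v, T i j k l
      = ∑ k ∈ u, ∑ l ∈ v, ∑ i ∈ s, ∑ j ∈ t, T i j k l := by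
  calc ∑ i ∈ s, ∑ j ∈ t, ∑ k ∈ u, ∑ l ∈ v, T i j k l
      = ∑ i ∈ s, ∑ k ∈ u, ∑ j ∈ t, ∑ l ∈ v, T i j k l :=
        Finset.sum_congr rfl fun i _ => Finset.sum_comm
    _ = ∑ k ∈ u, ∑ i ∈ s, ∑ j ∈ t, ∑ l ∈ v, T i j k l := Finset.sum_comm
    _ = ∑ k ∈ u, ∑ i ∈ s, ∑ l ∈ v, ∑ j ∈ t, T i j k l :=
        Finset.sum_congr rfl fun k _ => Finset.sum_congr rfl fun i _ => Finset.sum_comm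
    _ = ∑ k ∈ u, ∑ l ∈ v, ∑ i ∈ s, ∑ j ∈ t, T i j k l :=
        Finset.sum_congr rfl fun k _ => Finset.sum_comm

private lemma core_rearrange {n : ℕ} (c : ℝ) (f g : ℕ → ℝ)
    (hfa : Antitone f) (hga : Antitone g)
    (hf0 : ∀ i, 0 ≤ f i) (hg0 : ∀ i, 0 ≤ g i)
    (hfn : f n = 0) (hgn : g n = 0)
    (D : ℕ → ℕ → ℝ) (hD : ∀ i j, 0 ≤ D i j)
    (hrow : ∀ i, ∑ j ∈ Finset.range n, D i j ≤ c)
    (hcol : ∀ j, ∑ i ∈ Finset.range n, D i j ≤ c) :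
    ∑ i ∈ Finset.range n, ∑ j ∈ Finset.range n, D i j * (f i * g j)
      ≤ c * ∑ i ∈ Finset.range n, f i * g i := by
  have hfz : ∀ i, n ≤ i → f i = 0 := fun i hi => le_antisymm (hfn ▸ hfa hi) (hf0 i)
  have hgz : ∀ i, n ≤ i → g i = 0 := fun i hi => le_antisymm (hgn ▸ hga hi) (hg0 i)
  have hA0 : ∀ k, 0 ≤ f k - f (k+1) := fun k => sub_nonneg.2 (hfa (Nat.le_succ k))
  have hB0 : ∀ k, 0 ≤ g k - g (k+1) := fun k => sub_nonneg.2 (hga (Nat.le_succ k))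
  have lhs_eq : ∑ i ∈ Finset.range n, ∑ j ∈ Finset.range n, D i j * (f i * g j)
      = ∑ k ∈ Finset.range n, ∑ l ∈ Finset.range n, ((f k - f (k+1)) * (g l - g (l+1))) *
          (∑ i ∈ Finset.range (k+1), ∑ j ∈ Finset.range (l+1), D i j) := by
    calc ∑ i ∈ Finset.range n, ∑ j ∈ Finset.range n, D i j * (f i * g j)
        = ∑ i ∈ Finset.range n, ∑ j ∈ Finset.range n, ∑ k ∈ Finset.range n,
            ∑ l ∈ Finset.range n, (if i ≤ k then (f k - f (k+1)) else 0) *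
              (if j ≤ l then (g l - g (l+1)) else 0) * D i j := by
          refine Finset.sum_congr rfl fun i _ => Finset.sum_congr rfl fun j _ => ?_
          rw [expand_f' f hfn hfz i, expand_f' g hgn hgz j, Finset.sum_mul_sum, Finset.mul_sum]
          refine Finset.sum_congr rfl fun k _ => ?_
          rw [Finset.mul_sum]
          refine Finset.sum_congr rfl fun l _ => ?_
          ring
      _ = ∑ k ∈ Finset.range n, ∑ l ∈ Finset.range n, ∑ i ∈ Finset.range n,
            ∑ j ∈ Finset.range n, (if i ≤ k then (f k - f (k+1)) else 0) *
              (if j ≤ l then (g l - g (l+1)) else 0) * D i j := sum4_comm' _ _ _ _ _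
      _ = ∑ k ∈ Finset.range n, ∑ l ∈ Finset.range n, ((f k - f (k+1)) * (g l - g (l+1))) *
            (∑ i ∈ Finset.range (k+1), ∑ j ∈ Finset.range (l+1), D i j) := by
          refine Finset.sum_congr rfl fun k hk => Finset.sum_congr rfl fun l hl => ?_
          have e1 : ∀ i j, (if i ≤ k then (f k - f (k+1)) else 0) *
              (if j ≤ l then (g l - g (l+1)) else 0) * D i j
              = if i ≤ k then (if j ≤ l then ((f k - f (k+1)) * (g l - g (l+1))) * D i j else 0)
                else 0 := by
            intro i j
            by_cases hik : i ≤ k <;> by_cases hjl : j ≤ l <;> simp [hik, hjl] <;> ring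
          simp only [e1]
          have e3 : ∀ i ∈ Finset.range n, (∑ j ∈ Finset.range n,
              if i ≤ k then (if j ≤ l then ((f k - f (k+1)) * (g l - g (l+1))) * D i j else 0)
                else 0)
              = if i ≤ k then (∑ j ∈ Finset.range (l+1),
                  ((f k - f (k+1)) * (g l - g (l+1))) * D i j) else 0 := by
            intro i _
            by_cases hik : i ≤ k
            · simp only [hik, if_true]
              exact ite_sum_range' (mem_range.1 hl) _
            · simp [hik]
          rw [Finset.sum_congr rfl e3]
          rw [ite_sum_range' (mem_range.1 hk)
            (fun i => ∑ j ∈ Finset.range (l+1), ((f k - f (k+1)) * (g l - g (l+1))) * D i j)]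
          rw [Finset.mul_sum]
          refine Finset.sum_congr rfl fun i _ => ?_
          rw [Finset.mul_sum]
  have rhs_eq : ∑ i ∈ Finset.range n, f i * g i
      = ∑ k ∈ Finset.range n, ∑ l ∈ Finset.range n, ((f k - f (k+1)) * (g l - g (l+1))) *
          ((min k l + 1 : ℕ) : ℝ) := by
    calc ∑ i ∈ Finset.range n, f i * g i
        = ∑ i ∈ Finset.range n, ∑ k ∈ Finset.range n, ∑ l ∈ Finset.range n,
            (if i ≤ k then (f k - f (k+1)) else 0) * (if i ≤ l then (g l - g (l+1)) else 0) := by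
          refine Finset.sum_congr rfl fun i _ => ?_
          rw [expand_f' f hfn hfz i, expand_f' g hgn hgz i, Finset.sum_mul_sum]
      _ = ∑ k ∈ Finset.range n, ∑ l ∈ Finset.range n, ∑ i ∈ Finset.range n,
            (if i ≤ k then (f k - f (k+1)) else 0) * (if i ≤ l then (g l - g (l+1)) else 0) := by
          rw [Finset.sum_comm]
          exact Finset.sum_congr rfl fun k _ => Finset.sum_comm
      _ = ∑ k ∈ Finset.range n, ∑ l ∈ Finset.range n, ((f k - f (k+1)) * (g l - g (l+1))) *
            ((min k l + 1 : ℕ) : ℝ) := by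
          refine Finset.sum_congr rfl fun k hk => Finset.sum_congr rfl fun l hl => ?_
          have e2 : ∀ i, (if i ≤ k then (f k - f (k+1)) else 0) *
              (if i ≤ l then (g l - g (l+1)) else 0)
              = if i ≤ min k l then (f k - f (k+1)) * (g l - g (l+1)) else 0 := by
            intro i
            by_cases h1 : i ≤ k <;> by_cases h2 : i ≤ l
            · simp [h1, h2, le_min h1 h2]
            · have : ¬ i ≤ min k l := fun h => h2 (h.trans (min_le_right k l))
              simp [h1, h2, this]
            · have : ¬ i ≤ min k l := fun h => h1 (h.trans (min_le_left k l))
              simp [h1, h2, this]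
            · have : ¬ i ≤ min k l := fun h => h1 (h.trans (min_le_left k l))
              simp [h1, h2, this]
          simp only [e2]
          rw [ite_sum_range' (lt_of_le_of_lt (min_le_left k l) (mem_range.1 hk))]
          rw [Finset.sum_const, Finset.card_range, nsmul_eq_mul, mul_comm]
  have hSbound : ∀ k < n, ∀ l < n,
      (∑ i ∈ Finset.range (k+1), ∑ j ∈ Finset.range (l+1), D i j)
        ≤ c * ((min k l + 1 : ℕ) : ℝ) := by
    intro k hk l hl
    rcases le_total k l with hkl | hkl
    · have hb : ∀ i, ∑ j ∈ Finset.range (l+1), D i j ≤ c := fun i =>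
        le_trans (Finset.sum_le_sum_of_subset_of_nonneg
          (Finset.range_subset_range.2 (by omega)) (fun j _ _ => hD i j)) (hrow i)
      calc (∑ i ∈ Finset.range (k+1), ∑ j ∈ Finset.range (l+1), D i j)
          ≤ ∑ _i ∈ Finset.range (k+1), c := Finset.sum_le_sum fun i _ => hb i
        _ = c * ((min k l + 1 : ℕ) : ℝ) := by
            rw [Finset.sum_const, Finset.card_range, nsmul_eq_mul, min_eq_left hkl]
            push_cast; ring
    · have hb : ∀ j, ∑ i ∈ Finset.range (k+1), D i j ≤ c := fun j =>
        le_trans (Finset.sum_le_sum_of_subset_of_nonneg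
          (Finset.range_subset_range.2 (by omega)) (fun i _ _ => hD i j)) (hcol j)
      rw [Finset.sum_comm]
      calc (∑ j ∈ Finset.range (l+1), ∑ i ∈ Finset.range (k+1), D i j)
          ≤ ∑ _j ∈ Finset.range (l+1), c := Finset.sum_le_sum fun j _ => hb j
        _ = c * ((min k l + 1 : ℕ) : ℝ) := by
            rw [Finset.sum_const, Finset.card_range, nsmul_eq_mul, min_eq_right hkl]
            push_cast; ring
  rw [lhs_eq, rhs_eq, Finset.mul_sum]
  refine Finset.sum_le_sum fun k hk => ?_
  rw [Finset.mul_sum]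
  refine Finset.sum_le_sum fun l hl => ?_
  have h1 : 0 ≤ (f k - f (k+1)) * (g l - g (l+1)) := mul_nonneg (hA0 k) (hB0 l)
  calc ((f k - f (k+1)) * (g l - g (l+1))) *
        (∑ i ∈ Finset.range (k+1), ∑ j ∈ Finset.range (l+1), D i j)
      ≤ ((f k - f (k+1)) * (g l - g (l+1))) * (c * ((min k l + 1 : ℕ) : ℝ)) :=
        mul_le_mul_of_nonneg_left (hSbound k (mem_range.1 hk) l (mem_range.1 hl)) h1
    _ = c * (((f k - f (k+1)) * (g l - g (l+1))) * ((min k l + 1 : ℕ) : ℝ)) := by ring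

noncomputable def toE {n : ℕ} (x : Fin n → ℝ) : EuclideanSpace ℝ (Fin n) :=
  (WithLp.equiv 2 _).symm x

private lemma toE_inner {n : ℕ} (x y : Fin n → ℝ) : (inner ℝ (toE x) (toE y) : ℝ) = x ⬝ᵥ y := by
  simp [toE, PiLp.inner_apply, dotProduct, mul_comm]

private lemma toE_norm_sq {n : ℕ} (x : Fin n → ℝ) : ‖toE x‖ ^ 2 = x ⬝ᵥ x := by
  rw [← real_inner_self_eq_norm_sq, toE_inner]

private lemma dot_abs_le {n : ℕ} (x y : Fin n → ℝ) : |x ⬝ᵥ y| ≤ ‖toE x‖ * ‖toE y‖ := by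
  rw [← toE_inner]; exact abs_real_inner_le_norm _ _

private lemma opbound {n : ℕ} (Δ : Matrix (Fin n) (Fin n) ℝ) (ε : ℝ)
    (hΔ : ‖Matrix.toEuclideanCLM (𝕜 := ℝ) Δ‖ ≤ ε) (x : Fin n → ℝ) :
    ‖toE (Δ *ᵥ x)‖ ≤ ε * ‖toE x‖ := by
  have h1 : toE (Δ *ᵥ x) = Matrix.toEuclideanCLM (𝕜 := ℝ) Δ (toE x) := by
    rw [toE, toE]; rfl
  rw [h1]
  calc ‖Matrix.toEuclideanCLM (𝕜 := ℝ) Δ (toE x)‖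
      ≤ ‖Matrix.toEuclideanCLM (𝕜 := ℝ) Δ‖ * ‖toE x‖ := ContinuousLinearMap.le_opNorm _ _
    _ ≤ ε * ‖toE x‖ := mul_le_mul_of_nonneg_right hΔ (norm_nonneg _)

private lemma opboundT {n : ℕ} (Δ : Matrix (Fin n) (Fin n) ℝ) (ε : ℝ)
    (hΔ : ‖Matrix.toEuclideanCLM (𝕜 := ℝ) Δ‖ ≤ ε) (x : Fin n → ℝ) :
    ‖toE (Δᵀ *ᵥ x)‖ ≤ ε * ‖toE x‖ := by
  have hε : 0 ≤ ε := le_trans (norm_nonneg _) hΔ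
  set d : Fin n → ℝ := Δᵀ *ᵥ x with hd
  by_cases h0 : ‖toE d‖ = 0
  · rw [h0]; positivity
  have hpos : 0 < ‖toE d‖ := lt_of_le_of_ne (norm_nonneg _) (Ne.symm h0)
  have key : ‖toE d‖ * ‖toE d‖ ≤ (ε * ‖toE x‖) * ‖toE d‖ := by
    have e1 : ‖toE d‖ * ‖toE d‖ = d ⬝ᵥ d := by rw [← sq, toE_norm_sq]
    have e2 : d ⬝ᵥ d = x ⬝ᵥ (Δ *ᵥ d) := by
      rw [hd, Matrix.mulVec_transpose, ← Matrix.dotProduct_mulVec]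
    rw [e1, e2]
    calc x ⬝ᵥ (Δ *ᵥ d) ≤ |x ⬝ᵥ (Δ *ᵥ d)| := le_abs_self _
      _ ≤ ‖toE x‖ * ‖toE (Δ *ᵥ d)‖ := dot_abs_le _ _
      _ ≤ ‖toE x‖ * (ε * ‖toE d‖) :=
          mul_le_mul_of_nonneg_left (opbound Δ ε hΔ d) (norm_nonneg _)
      _ = (ε * ‖toE x‖) * ‖toE d‖ := by ring
  exact le_of_mul_le_mul_right key hpos

private lemma bessel_dot {n : ℕ} (u : Fin n → (Fin n → ℝ))
    (horth : ∀ i j, i ≠ j → u i ⬝ᵥ u j = 0)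
    (hnorm : ∀ i, u i = 0 ∨ u i ⬝ᵥ u i = 1) (c : Fin n → ℝ) :
    ∑ j, (c ⬝ᵥ u j) ^ 2 ≤ ‖toE c‖ ^ 2 := by
  classical
  set p : Fin n → Prop := fun j => u j ≠ 0 with hp
  have hON : Orthonormal ℝ (fun j : {j // p j} => toE (u j.1)) := by
    rw [orthonormal_iff_ite]
    intro i j
    by_cases hij : i = j
    · subst hij
      rw [toE_inner, if_pos rfl]
      rcases hnorm i.1 with h | h
      · exact absurd h i.2
      · exact h
    · rw [toE_inner, if_neg hij]
      exact horth i.1 j.1 (fun h => hij (Subtype.ext h))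
  have hb := hON.sum_inner_products_le (s := Finset.univ) (toE c)
  have hsum : ∑ j, (c ⬝ᵥ u j) ^ 2
      = ∑ j : {j // p j}, ‖(inner ℝ (toE (u j.1)) (toE c) : ℝ)‖ ^ 2 := by
    rw [← Finset.sum_subtype (Finset.univ.filter p)
      (by intro j; simp [hp]) (fun j => ‖(inner ℝ (toE (u j)) (toE c) : ℝ)‖ ^ 2)]
    rw [Finset.sum_filter]
    refine Finset.sum_congr rfl fun j _ => ?_
    by_cases hj : p j
    · rw [if_pos hj, toE_inner, Real.norm_eq_abs, sq_abs, dotProduct_comm]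
    · rw [if_neg hj]
      have : u j = 0 := not_not.1 hj
      simp [this]
  rw [hsum]
  exact hb

private lemma vecMulVec_mul_mat {n : ℕ} (x y : Fin n → ℝ) (M : Matrix (Fin n) (Fin n) ℝ) :
    vecMulVec x y * M = vecMulVec x (y ᵥ* M) := by
  ext a b
  simp only [Matrix.mul_apply, vecMulVec_apply, Matrix.vecMul, dotProduct, Finset.mul_sum]
  exact Finset.sum_congr rfl fun c _ => by ring

private lemma vecMulVec_mul_vecMulVec {n : ℕ} (x y z w : Fin n → ℝ) :
    vecMulVec x y * vecMulVec z w = (y ⬝ᵥ z) • vecMulVec x w := by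
  ext a b
  simp only [Matrix.mul_apply, vecMulVec_apply, Matrix.smul_apply, dotProduct,
    Finset.sum_mul, smul_eq_mul]
  exact Finset.sum_congr rfl fun c _ => by ring

private lemma trace_vecMulVec {n : ℕ} (x y : Fin n → ℝ) : (vecMulVec x y).trace = x ⬝ᵥ y := by
  simp [Matrix.trace, Matrix.diag, vecMulVec_apply, dotProduct]

private lemma trace_rank_one {n : ℕ} (x y z w : Fin n → ℝ) (P Q : Matrix (Fin n) (Fin n) ℝ) :
    (vecMulVec x y * P * vecMulVec z w * Q).trace
      = ((y ᵥ* P) ⬝ᵥ z) * ((w ᵥ* Q) ⬝ᵥ x) := by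
  rw [vecMulVec_mul_mat x y P, vecMulVec_mul_vecMulVec, Matrix.smul_mul,
    vecMulVec_mul_mat, Matrix.trace_smul, trace_vecMulVec, smul_eq_mul,
    dotProduct_comm x (w ᵥ* Q)]

private lemma decomp {n : ℕ} (G : Matrix (Fin n) (Fin n) ℝ) (v : Fin n → Fin n → ℝ)
    (hres : ∀ a b, ∑ i, v i a * v i b = if a = b then (1:ℝ) else 0) :
    G = ∑ i, vecMulVec (G *ᵥ v i) (v i) := by
  ext a b
  rw [Matrix.sum_apply]
  simp only [vecMulVec_apply, Matrix.mulVec, dotProduct]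
  calc G a b = ∑ c, G a c * (if c = b then (1:ℝ) else 0) := by
        simp [Finset.sum_ite_eq]
    _ = ∑ c, G a c * ∑ i, v i c * v i b := by
        refine Finset.sum_congr rfl fun c _ => by rw [hres]
    _ = ∑ c, ∑ i, G a c * (v i c * v i b) := by
        refine Finset.sum_congr rfl fun c _ => by rw [Finset.mul_sum]
    _ = ∑ i, ∑ c, G a c * (v i c * v i b) := Finset.sum_comm
    _ = ∑ i, (∑ c, G a c * v i c) * v i b := by
        refine Finset.sum_congr rfl fun i _ => ?_
        rw [Finset.sum_mul]
        exact Finset.sum_congr rfl fun c _ => by ring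

private lemma isHermitian_transpose_mul_self {n : ℕ} (G : Matrix (Fin n) (Fin n) ℝ) :
    (Gᵀ * G).IsHermitian := by
  simpa using Matrix.isHermitian_conjTranspose_mul_self G

private lemma res_id {n : ℕ} (A : Matrix (Fin n) (Fin n) ℝ) (hA : A.IsHermitian)
    (e : Equiv.Perm (Fin n)) (a b : Fin n) :
    ∑ i, (WithLp.equiv 2 _) (hA.eigenvectorBasis (e i)) a *
      (WithLp.equiv 2 _) (hA.eigenvectorBasis (e i)) b = if a = b then (1:ℝ) else 0 := by
  rw [Equiv.sum_comp e (fun i => (WithLp.equiv 2 _) (hA.eigenvectorBasis i) a *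
    (WithLp.equiv 2 _) (hA.eigenvectorBasis i) b)]
  have hU : ∀ i c, (WithLp.equiv 2 _) (hA.eigenvectorBasis i) c
      = (hA.eigenvectorUnitary : Matrix (Fin n) (Fin n) ℝ) c i := by
    intro i c
    rw [Matrix.IsHermitian.eigenvectorUnitary_apply]
    rfl
  simp only [hU]
  have h1 : ((hA.eigenvectorUnitary : Matrix (Fin n) (Fin n) ℝ) *
      star (hA.eigenvectorUnitary : Matrix (Fin n) (Fin n) ℝ)) a b
      = ∑ i, (hA.eigenvectorUnitary : Matrix (Fin n) (Fin n) ℝ) a i *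
          (hA.eigenvectorUnitary : Matrix (Fin n) (Fin n) ℝ) b i := by
    simp [Matrix.mul_apply, Matrix.star_eq_conjTranspose, Matrix.conjTranspose_apply]
  have h2 : ((hA.eigenvectorUnitary : Matrix (Fin n) (Fin n) ℝ) *
      star (hA.eigenvectorUnitary : Matrix (Fin n) (Fin n) ℝ)) = 1 := by
    have := hA.eigenvectorUnitary.2
    rw [Unitary.mem_iff] at this
    exact_mod_cast this.2
  rw [← h1, h2, Matrix.one_apply]

private lemma v_dot {n : ℕ} (G : Matrix (Fin n) (Fin n) ℝ) (e : Equiv.Perm (Fin n))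
    (i j : Fin n) :
    ((WithLp.equiv 2 _) ((isHermitian_transpose_mul_self G).eigenvectorBasis (e i)) : Fin n → ℝ) ⬝ᵥ
      (WithLp.equiv 2 _) ((isHermitian_transpose_mul_self G).eigenvectorBasis (e j))
      = if i = j then (1:ℝ) else 0 := by
  set hA := isHermitian_transpose_mul_self G
  rw [← toE_inner]
  have hx : ∀ k, toE ((WithLp.equiv 2 _) (hA.eigenvectorBasis k)) = hA.eigenvectorBasis k :=
    fun k => Equiv.symm_apply_apply _ _
  rw [hx, hx]
  have hON := (hA.eigenvectorBasis.orthonormal).comp e e.injective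
  rw [orthonormal_iff_ite] at hON
  have := hON i j
  simpa using this

private lemma w_dot {n : ℕ} (G : Matrix (Fin n) (Fin n) ℝ) (e : Equiv.Perm (Fin n))
    (i j : Fin n) :
    (G *ᵥ (WithLp.equiv 2 _) ((isHermitian_transpose_mul_self G).eigenvectorBasis (e i))) ⬝ᵥ
      (G *ᵥ (WithLp.equiv 2 _) ((isHermitian_transpose_mul_self G).eigenvectorBasis (e j)))
      = if i = j then (isHermitian_transpose_mul_self G).eigenvalues (e i) else 0 := by
  set hA := isHermitian_transpose_mul_self G
  set x : Fin n → Fin n → ℝ := fun k => (WithLp.equiv 2 _) (hA.eigenvectorBasis (e k)) with hxdef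
  have key : (G *ᵥ x i) ⬝ᵥ (G *ᵥ x j) = x i ⬝ᵥ ((Gᴴ * G) *ᵥ x j) := by
    rw [← Matrix.mulVec_mulVec, Matrix.dotProduct_mulVec (x i) Gᴴ]
    congr 1
    rw [Matrix.conjTranspose_eq_transpose_of_trivial, Matrix.vecMul_transpose]
  rw [key, Matrix.conjTranspose_eq_transpose_of_trivial]
  show x i ⬝ᵥ ((Gᵀ * G) *ᵥ (hA.eigenvectorBasis (e j)).ofLp) = _
  rw [hA.mulVec_eigenvectorBasis (e j)]
  change x i ⬝ᵥ (hA.eigenvalues (e j) • x j) = _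
  rw [dotProduct_smul]
  have := v_dot G e i j
  rw [this]
  by_cases hij : i = j
  · subst hij; simp
  · simp [hij]

end Helpers

/-- `σ` lists the singular values of the square real matrix `A` in nonincreasing
order: it is an antitone enumeration of the square roots of the eigenvalues of
`Aᵀ * A` (= `Aᴴ * A` over ℝ). -/
def IsSingularValueSeq {n : ℕ} (A : Matrix (Fin n) (Fin n) ℝ) (σ : Fin n → ℝ) : Prop :=
  Antitone σ ∧ ∃ e : Equiv.Perm (Fin n), ∀ i,
    σ i = Real.sqrt ((show (Aᵀ * A).IsHermitian by simpa using Matrix.isHermitian_conjTranspose_mul_self A).eigenvalues (e i))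

set_option maxHeartbeats 2000000 in
theorem trace_quadratic_perturbation_bound {n : ℕ}
    (G1 G2 Δ : Matrix (Fin n) (Fin n) ℝ) (ε : ℝ)
    (σ1 σ2 : Fin n → ℝ)
    (h1 : IsSingularValueSeq G1 σ1) (h2 : IsSingularValueSeq G2 σ2)
    (hΔ : ‖Matrix.toEuclideanCLM (𝕜 := ℝ) Δ‖ ≤ ε) :
    |(G1 * Δ * G2 * Δᵀ).trace| ≤ ε ^ 2 * ∑ i, σ1 i * σ2 i := by
  classical
  obtain ⟨ha1, e1, hs1⟩ := h1
  obtain ⟨ha2, e2, hs2⟩ := h2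
  have hε : 0 ≤ ε := le_trans (norm_nonneg _) hΔ
  have hε2 : 0 ≤ ε ^ 2 := sq_nonneg ε
  set v1 : Fin n → Fin n → ℝ :=
    fun i => (WithLp.equiv 2 _) ((isHermitian_transpose_mul_self G1).eigenvectorBasis (e1 i))
    with hv1def
  set v2 : Fin n → Fin n → ℝ :=
    fun i => (WithLp.equiv 2 _) ((isHermitian_transpose_mul_self G2).eigenvectorBasis (e2 i))
    with hv2def
  set w1 : Fin n → Fin n → ℝ := fun i => G1 *ᵥ v1 i with hw1def
  set w2 : Fin n → Fin n → ℝ := fun i => G2 *ᵥ v2 i with hw2def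
  -- nonnegativity and squares of singular values
  have hσ1nn : ∀ i, 0 ≤ σ1 i := fun i => (hs1 i) ▸ Real.sqrt_nonneg _
  have hσ2nn : ∀ i, 0 ≤ σ2 i := fun i => (hs2 i) ▸ Real.sqrt_nonneg _
  have hσ1sq : ∀ i, σ1 i ^ 2 = (isHermitian_transpose_mul_self G1).eigenvalues (e1 i) := by
    intro i
    rw [hs1 i]; exact Real.sq_sqrt (Matrix.eigenvalues_conjTranspose_mul_self_nonneg G1 (e1 i))
  have hσ2sq : ∀ i, σ2 i ^ 2 = (isHermitian_transpose_mul_self G2).eigenvalues (e2 i) := by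
    intro i
    rw [hs2 i]; exact Real.sq_sqrt (Matrix.eigenvalues_conjTranspose_mul_self_nonneg G2 (e2 i))
  -- dot products of the vectors v and w
  have hv1dot : ∀ i j, v1 i ⬝ᵥ v1 j = if i = j then (1:ℝ) else 0 := fun i j => v_dot G1 e1 i j
  have hv2dot : ∀ i j, v2 i ⬝ᵥ v2 j = if i = j then (1:ℝ) else 0 := fun i j => v_dot G2 e2 i j
  have hw1dot : ∀ i j, w1 i ⬝ᵥ w1 j = if i = j then σ1 i ^ 2 else 0 := by
    intro i j
    rw [hσ1sq i]
    exact w_dot G1 e1 i j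
  have hw2dot : ∀ i j, w2 i ⬝ᵥ w2 j = if i = j then σ2 i ^ 2 else 0 := by
    intro i j
    rw [hσ2sq i]
    exact w_dot G2 e2 i j
  -- Normalized left singular vectors
  set u1 : Fin n → Fin n → ℝ := fun i => if σ1 i = 0 then 0 else (σ1 i)⁻¹ • w1 i with hu1def
  set u2 : Fin n → Fin n → ℝ := fun i => if σ2 i = 0 then 0 else (σ2 i)⁻¹ • w2 i with hu2def
  have hw1u : ∀ i, w1 i = σ1 i • u1 i := by
    intro i
    by_cases h : σ1 i = 0
    · have hz : w1 i ⬝ᵥ w1 i = 0 := by rw [hw1dot i i, if_pos rfl, h]; ring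
      have : w1 i = 0 := (dotProduct_self_eq_zero).1 hz
      rw [this, hu1def]
      simp [h]
    · rw [hu1def]
      simp only [h, if_false]
      rw [smul_inv_smul₀ h]
  have hw2u : ∀ i, w2 i = σ2 i • u2 i := by
    intro i
    by_cases h : σ2 i = 0
    · have hz : w2 i ⬝ᵥ w2 i = 0 := by rw [hw2dot i i, if_pos rfl, h]; ring
      have : w2 i = 0 := (dotProduct_self_eq_zero).1 hz
      rw [this, hu2def]
      simp [h]
    · rw [hu2def]
      simp only [h, if_false]
      rw [smul_inv_smul₀ h]
  have hu1norm : ∀ i, u1 i = 0 ∨ u1 i ⬝ᵥ u1 i = 1 := by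
    intro i
    by_cases h : σ1 i = 0
    · left; rw [hu1def]; simp [h]
    · right
      rw [hu1def]
      simp only [h, if_false]
      rw [smul_dotProduct, dotProduct_smul, hw1dot i i, if_pos rfl]
      field_simp
      simp only [smul_eq_mul]
      field_simp
  have hu2norm : ∀ i, u2 i = 0 ∨ u2 i ⬝ᵥ u2 i = 1 := by
    intro i
    by_cases h : σ2 i = 0
    · left; rw [hu2def]; simp [h]
    · right
      rw [hu2def]
      simp only [h, if_false]
      rw [smul_dotProduct, dotProduct_smul, hw2dot i i, if_pos rfl]
      field_simp
      simp only [smul_eq_mul]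
      field_simp
  have hu1orth : ∀ i j, i ≠ j → u1 i ⬝ᵥ u1 j = 0 := by
    intro i j hij
    rw [hu1def]
    by_cases h : σ1 i = 0
    · simp [h]
    · by_cases h' : σ1 j = 0
      · simp [h, h']
      · simp only [h, h', if_false]
        rw [smul_dotProduct, dotProduct_smul, hw1dot i j, if_neg hij]
        simp
  have hu2orth : ∀ i j, i ≠ j → u2 i ⬝ᵥ u2 j = 0 := by
    intro i j hij
    rw [hu2def]
    by_cases h : σ2 i = 0
    · simp [h]
    · by_cases h' : σ2 j = 0
      · simp [h, h']
      · simp only [h, h', if_false]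
        rw [smul_dotProduct, dotProduct_smul, hw2dot i j, if_neg hij]
        simp
  have hu1le : ∀ i, u1 i ⬝ᵥ u1 i ≤ 1 := by
    intro i
    rcases hu1norm i with h | h
    · simp [h]
    · rw [h]
  have hu2le : ∀ i, u2 i ⬝ᵥ u2 i ≤ 1 := by
    intro i
    rcases hu2norm i with h | h
    · simp [h]
    · rw [h]
  -- trace identity
  have hdec1 : G1 = ∑ i, vecMulVec (w1 i) (v1 i) := decomp G1 v1
    (res_id _ (isHermitian_transpose_mul_self G1) e1)
  have hdec2 : G2 = ∑ i, vecMulVec (w2 i) (v2 i) := decomp G2 v2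
    (res_id _ (isHermitian_transpose_mul_self G2) e2)
  have htr : (G1 * Δ * G2 * Δᵀ).trace
      = ∑ i, ∑ j, ((v1 i ᵥ* Δ) ⬝ᵥ w2 j) * ((v2 j ᵥ* Δᵀ) ⬝ᵥ w1 i) := by
    conv_lhs => rw [hdec1, hdec2]
    simp only [Finset.sum_mul, Finset.mul_sum, Matrix.trace_sum]
    rw [Finset.sum_comm]
    refine Finset.sum_congr rfl fun i _ => Finset.sum_congr rfl fun j _ => ?_
    exact trace_rank_one _ _ _ _ _ _
  -- the a and b coefficients
  set a : Fin n → Fin n → ℝ := fun i j => (v1 i ᵥ* Δ) ⬝ᵥ u2 j with hadef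
  set b : Fin n → Fin n → ℝ := fun i j => (v2 j ᵥ* Δᵀ) ⬝ᵥ u1 i with hbdef
  have hterm : ∀ i j, ((v1 i ᵥ* Δ) ⬝ᵥ w2 j) * ((v2 j ᵥ* Δᵀ) ⬝ᵥ w1 i)
      = (σ1 i * σ2 j) * (a i j * b i j) := by
    intro i j
    rw [hw1u i, hw2u j, dotProduct_smul, dotProduct_smul, hadef, hbdef]
    simp only [smul_eq_mul]
    ring
  -- Bessel bounds
  have hdotsq : ∀ x : Fin n → ℝ, ‖toE x‖ ^ 2 = x ⬝ᵥ x := toE_norm_sq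
  have hv1self : ∀ i, v1 i ⬝ᵥ v1 i = 1 := by intro i; rw [hv1dot i i, if_pos rfl]
  have hv2self : ∀ i, v2 i ⬝ᵥ v2 i = 1 := by intro i; rw [hv2dot i i, if_pos rfl]
  have hopsq : ∀ x : Fin n → ℝ, ‖toE (Δ *ᵥ x)‖ ^ 2 ≤ ε ^ 2 * (x ⬝ᵥ x) := by
    intro x
    have := opbound Δ ε hΔ x
    calc ‖toE (Δ *ᵥ x)‖ ^ 2 ≤ (ε * ‖toE x‖) ^ 2 := by
          exact pow_le_pow_left₀ (norm_nonneg _) this 2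
      _ = ε ^ 2 * ‖toE x‖ ^ 2 := by ring
      _ = ε ^ 2 * (x ⬝ᵥ x) := by rw [toE_norm_sq]
  have hopsqT : ∀ x : Fin n → ℝ, ‖toE (Δᵀ *ᵥ x)‖ ^ 2 ≤ ε ^ 2 * (x ⬝ᵥ x) := by
    intro x
    have := opboundT Δ ε hΔ x
    calc ‖toE (Δᵀ *ᵥ x)‖ ^ 2 ≤ (ε * ‖toE x‖) ^ 2 := by
          exact pow_le_pow_left₀ (norm_nonneg _) this 2
      _ = ε ^ 2 * ‖toE x‖ ^ 2 := by ring
      _ = ε ^ 2 * (x ⬝ᵥ x) := by rw [toE_norm_sq]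
  have hrowA : ∀ i, ∑ j, (a i j) ^ 2 ≤ ε ^ 2 := by
    intro i
    have ha' : ∀ j, a i j = (Δᵀ *ᵥ v1 i) ⬝ᵥ u2 j := by
      intro j
      show (v1 i ᵥ* Δ) ⬝ᵥ u2 j = (Δᵀ *ᵥ v1 i) ⬝ᵥ u2 j
      rw [Matrix.mulVec_transpose]
    calc ∑ j, (a i j) ^ 2 = ∑ j, ((Δᵀ *ᵥ v1 i) ⬝ᵥ u2 j) ^ 2 := by
          exact Finset.sum_congr rfl fun j _ => by rw [ha' j]
      _ ≤ ‖toE (Δᵀ *ᵥ v1 i)‖ ^ 2 := bessel_dot u2 hu2orth hu2norm _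
      _ ≤ ε ^ 2 * (v1 i ⬝ᵥ v1 i) := hopsqT _
      _ = ε ^ 2 := by rw [hv1self i]; ring
  have hcolA : ∀ j, ∑ i, (a i j) ^ 2 ≤ ε ^ 2 := by
    intro j
    have ha' : ∀ i, a i j = (Δ *ᵥ u2 j) ⬝ᵥ v1 i := by
      intro i
      show (v1 i ᵥ* Δ) ⬝ᵥ u2 j = (Δ *ᵥ u2 j) ⬝ᵥ v1 i
      rw [← Matrix.dotProduct_mulVec, dotProduct_comm]
    calc ∑ i, (a i j) ^ 2 = ∑ i, ((Δ *ᵥ u2 j) ⬝ᵥ v1 i) ^ 2 := by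
          exact Finset.sum_congr rfl fun i _ => by rw [ha' i]
      _ ≤ ‖toE (Δ *ᵥ u2 j)‖ ^ 2 := bessel_dot v1
          (fun i k hik => by rw [hv1dot i k, if_neg hik]) (fun i => Or.inr (hv1self i)) _
      _ ≤ ε ^ 2 * (u2 j ⬝ᵥ u2 j) := hopsq _
      _ ≤ ε ^ 2 * 1 := mul_le_mul_of_nonneg_left (hu2le j) hε2
      _ = ε ^ 2 := mul_one _
  have hrowB : ∀ i, ∑ j, (b i j) ^ 2 ≤ ε ^ 2 := by
    intro i
    have hb' : ∀ j, b i j = (Δᵀ *ᵥ u1 i) ⬝ᵥ v2 j := by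
      intro j
      show (v2 j ᵥ* Δᵀ) ⬝ᵥ u1 i = (Δᵀ *ᵥ u1 i) ⬝ᵥ v2 j
      rw [Matrix.vecMul_transpose, dotProduct_comm, Matrix.dotProduct_mulVec,
        ← Matrix.mulVec_transpose]
    calc ∑ j, (b i j) ^ 2 = ∑ j, ((Δᵀ *ᵥ u1 i) ⬝ᵥ v2 j) ^ 2 := by
          exact Finset.sum_congr rfl fun j _ => by rw [hb' j]
      _ ≤ ‖toE (Δᵀ *ᵥ u1 i)‖ ^ 2 := bessel_dot v2
          (fun p q hpq => by rw [hv2dot p q, if_neg hpq]) (fun p => Or.inr (hv2self p)) _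
      _ ≤ ε ^ 2 * (u1 i ⬝ᵥ u1 i) := hopsqT _
      _ ≤ ε ^ 2 * 1 := mul_le_mul_of_nonneg_left (hu1le i) hε2
      _ = ε ^ 2 := mul_one _
  have hcolB : ∀ j, ∑ i, (b i j) ^ 2 ≤ ε ^ 2 := by
    intro j
    have hb' : ∀ i, b i j = (Δ *ᵥ v2 j) ⬝ᵥ u1 i := by
      intro i
      show (v2 j ᵥ* Δᵀ) ⬝ᵥ u1 i = (Δ *ᵥ v2 j) ⬝ᵥ u1 i
      rw [Matrix.vecMul_transpose]
    calc ∑ i, (b i j) ^ 2 = ∑ i, ((Δ *ᵥ v2 j) ⬝ᵥ u1 i) ^ 2 := by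
          exact Finset.sum_congr rfl fun i _ => by rw [hb' i]
      _ ≤ ‖toE (Δ *ᵥ v2 j)‖ ^ 2 := bessel_dot u1 hu1orth hu1norm _
      _ ≤ ε ^ 2 * (v2 j ⬝ᵥ v2 j) := hopsq _
      _ = ε ^ 2 := by rw [hv2self j]; ring
  -- ℕ-indexed versions for the rearrangement lemma
  set F1 : ℕ → ℝ := fun m => if h : m < n then σ1 ⟨m, h⟩ else 0 with hF1def
  set F2 : ℕ → ℝ := fun m => if h : m < n then σ2 ⟨m, h⟩ else 0 with hF2def
  set Da : ℕ → ℕ → ℝ := fun p q =>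
    if h : p < n ∧ q < n then (a ⟨p, h.1⟩ ⟨q, h.2⟩) ^ 2 else 0 with hDadef
  set Db : ℕ → ℕ → ℝ := fun p q =>
    if h : p < n ∧ q < n then (b ⟨p, h.1⟩ ⟨q, h.2⟩) ^ 2 else 0 with hDbdef
  have hF1anti : Antitone F1 := by
    intro m m' hmm'
    rw [hF1def]
    by_cases h' : m' < n
    · have h : m < n := lt_of_le_of_lt hmm' h'
      simp only [h, h', dif_pos]
      exact ha1 (by exact hmm')
    · simp only [h', dif_neg, not_false_iff]
      by_cases h : m < n
      · simp only [h, dif_pos]; exact hσ1nn _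
      · simp [h]
  have hF2anti : Antitone F2 := by
    intro m m' hmm'
    rw [hF2def]
    by_cases h' : m' < n
    · have h : m < n := lt_of_le_of_lt hmm' h'
      simp only [h, h', dif_pos]
      exact ha2 (by exact hmm')
    · simp only [h', dif_neg, not_false_iff]
      by_cases h : m < n
      · simp only [h, dif_pos]; exact hσ2nn _
      · simp [h]
  have hF1nn : ∀ m, 0 ≤ F1 m := by
    intro m; rw [hF1def]
    by_cases h : m < n
    · simp only [h, dif_pos]; exact hσ1nn _
    · simp [h]
  have hF2nn : ∀ m, 0 ≤ F2 m := by
    intro m; rw [hF2def]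
    by_cases h : m < n
    · simp only [h, dif_pos]; exact hσ2nn _
    · simp [h]
  have hF1n : F1 n = 0 := by rw [hF1def]; simp
  have hF2n : F2 n = 0 := by rw [hF2def]; simp
  have hDann : ∀ p q, 0 ≤ Da p q := by
    intro p q; rw [hDadef]
    by_cases h : p < n ∧ q < n
    · simp only [h, dif_pos]; exact sq_nonneg _
    · simp [h]
  have hDbnn : ∀ p q, 0 ≤ Db p q := by
    intro p q; rw [hDbdef]
    by_cases h : p < n ∧ q < n
    · simp only [h, dif_pos]; exact sq_nonneg _
    · simp [h]
  -- conversions between Fin sums and range sums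
  have hconvA : ∀ p, p < n → ∀ (x : Fin n → ℝ),
      ∑ q ∈ Finset.range n, (if h : p < n ∧ q < n then x ⟨q, h.2⟩ else 0)
        = ∑ j, x j := by
    intro p hp x
    rw [← Fin.sum_univ_eq_sum_range (fun q => if h : p < n ∧ q < n then x ⟨q, h.2⟩ else 0) n]
    refine Finset.sum_congr rfl fun j _ => ?_
    rw [dif_pos ⟨hp, j.isLt⟩]
  have hrowDa : ∀ p, ∑ q ∈ Finset.range n, Da p q ≤ ε ^ 2 := by
    intro p
    by_cases hp : p < n
    · rw [hDadef]
      rw [hconvA p hp (fun j => (a ⟨p, hp⟩ j) ^ 2)]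
      exact hrowA ⟨p, hp⟩
    · have : ∀ q, Da p q = 0 := by
        intro q; rw [hDadef]; exact dif_neg (fun h => hp h.1)
      simp only [this, Finset.sum_const_zero]
      exact hε2
  have hconvB : ∀ q, q < n → ∀ (x : Fin n → ℝ),
      ∑ p ∈ Finset.range n, (if h : p < n ∧ q < n then x ⟨p, h.1⟩ else 0)
        = ∑ i, x i := by
    intro q hq x
    rw [← Fin.sum_univ_eq_sum_range (fun p => if h : p < n ∧ q < n then x ⟨p, h.1⟩ else 0) n]
    refine Finset.sum_congr rfl fun i _ => ?_
    rw [dif_pos ⟨i.isLt, hq⟩]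
  have hcolDa : ∀ q, ∑ p ∈ Finset.range n, Da p q ≤ ε ^ 2 := by
    intro q
    by_cases hq : q < n
    · rw [hDadef]
      rw [hconvB q hq (fun i => (a i ⟨q, hq⟩) ^ 2)]
      exact hcolA ⟨q, hq⟩
    · have : ∀ p, Da p q = 0 := by
        intro p; rw [hDadef]; exact dif_neg (fun h => hq h.2)
      simp only [this, Finset.sum_const_zero]
      exact hε2
  have hrowDb : ∀ p, ∑ q ∈ Finset.range n, Db p q ≤ ε ^ 2 := by
    intro p
    by_cases hp : p < n
    · rw [hDbdef]
      rw [hconvA p hp (fun j => (b ⟨p, hp⟩ j) ^ 2)]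
      exact hrowB ⟨p, hp⟩
    · have : ∀ q, Db p q = 0 := by
        intro q; rw [hDbdef]; exact dif_neg (fun h => hp h.1)
      simp only [this, Finset.sum_const_zero]
      exact hε2
  have hcolDb : ∀ q, ∑ p ∈ Finset.range n, Db p q ≤ ε ^ 2 := by
    intro q
    by_cases hq : q < n
    · rw [hDbdef]
      rw [hconvB q hq (fun i => (b i ⟨q, hq⟩) ^ 2)]
      exact hcolB ⟨q, hq⟩
    · have : ∀ p, Db p q = 0 := by
        intro p; rw [hDbdef]; exact dif_neg (fun h => hq h.2)
      simp only [this, Finset.sum_const_zero]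
      exact hε2
  have hT : ∑ m ∈ Finset.range n, F1 m * F2 m = ∑ i, σ1 i * σ2 i := by
    rw [← Fin.sum_univ_eq_sum_range (fun m => F1 m * F2 m) n]
    refine Finset.sum_congr rfl fun i _ => ?_
    rw [hF1def, hF2def]
    simp only [i.isLt, dif_pos]
  have hSa : ∑ i, ∑ j, (a i j) ^ 2 * (σ1 i * σ2 j)
      = ∑ p ∈ Finset.range n, ∑ q ∈ Finset.range n, Da p q * (F1 p * F2 q) := by
    rw [← Fin.sum_univ_eq_sum_range
      (fun p => ∑ q ∈ Finset.range n, Da p q * (F1 p * F2 q)) n]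
    refine Finset.sum_congr rfl fun i _ => ?_
    rw [← Fin.sum_univ_eq_sum_range (fun q => Da (↑i) q * (F1 ↑i * F2 q)) n]
    refine Finset.sum_congr rfl fun j _ => ?_
    rw [hDadef, hF1def, hF2def]
    simp only [i.isLt, j.isLt, and_self, dif_pos]
  have hSb : ∑ i, ∑ j, (b i j) ^ 2 * (σ1 i * σ2 j)
      = ∑ p ∈ Finset.range n, ∑ q ∈ Finset.range n, Db p q * (F1 p * F2 q) := by
    rw [← Fin.sum_univ_eq_sum_range
      (fun p => ∑ q ∈ Finset.range n, Db p q * (F1 p * F2 q)) n]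
    refine Finset.sum_congr rfl fun i _ => ?_
    rw [← Fin.sum_univ_eq_sum_range (fun q => Db (↑i) q * (F1 ↑i * F2 q)) n]
    refine Finset.sum_congr rfl fun j _ => ?_
    rw [hDbdef, hF1def, hF2def]
    simp only [i.isLt, j.isLt, and_self, dif_pos]
  have hcoreA : ∑ i, ∑ j, (a i j) ^ 2 * (σ1 i * σ2 j) ≤ ε ^ 2 * ∑ i, σ1 i * σ2 i := by
    rw [hSa, ← hT]
    exact core_rearrange (ε ^ 2) F1 F2 hF1anti hF2anti hF1nn hF2nn hF1n hF2n Da hDann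
      hrowDa hcolDa
  have hcoreB : ∑ i, ∑ j, (b i j) ^ 2 * (σ1 i * σ2 j) ≤ ε ^ 2 * ∑ i, σ1 i * σ2 i := by
    rw [hSb, ← hT]
    exact core_rearrange (ε ^ 2) F1 F2 hF1anti hF2anti hF1nn hF2nn hF1n hF2n Db hDbnn
      hrowDb hcolDb
  -- Final chain
  calc |(G1 * Δ * G2 * Δᵀ).trace|
      = |∑ i, ∑ j, (σ1 i * σ2 j) * (a i j * b i j)| := by
        rw [htr]
        congr 1
        exact Finset.sum_congr rfl fun i _ => Finset.sum_congr rfl fun j _ => hterm i j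
    _ ≤ ∑ i, |∑ j, (σ1 i * σ2 j) * (a i j * b i j)| := Finset.abs_sum_le_sum_abs _ _
    _ ≤ ∑ i, ∑ j, |(σ1 i * σ2 j) * (a i j * b i j)| :=
        Finset.sum_le_sum fun i _ => Finset.abs_sum_le_sum_abs _ _
    _ ≤ ∑ i, ∑ j, (σ1 i * σ2 j) * (((a i j) ^ 2 + (b i j) ^ 2) / 2) := by
        refine Finset.sum_le_sum fun i _ => Finset.sum_le_sum fun j _ => ?_
        have hnn : 0 ≤ σ1 i * σ2 j := mul_nonneg (hσ1nn i) (hσ2nn j)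
        rw [abs_mul, abs_of_nonneg hnn, abs_mul]
        refine mul_le_mul_of_nonneg_left ?_ hnn
        nlinarith [sq_nonneg (|a i j| - |b i j|), sq_abs (a i j), sq_abs (b i j),
          abs_nonneg (a i j), abs_nonneg (b i j)]
    _ = (∑ i, ∑ j, (a i j) ^ 2 * (σ1 i * σ2 j)) / 2
          + (∑ i, ∑ j, (b i j) ^ 2 * (σ1 i * σ2 j)) / 2 := by
        rw [Finset.sum_div, Finset.sum_div, ← Finset.sum_add_distrib]
        refine Finset.sum_congr rfl fun i _ => ?_
        rw [Finset.sum_div, Finset.sum_div, ← Finset.sum_add_distrib]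
        refine Finset.sum_congr rfl fun j _ => ?_
        ring
    _ ≤ (ε ^ 2 * ∑ i, σ1 i * σ2 i) / 2 + (ε ^ 2 * ∑ i, σ1 i * σ2 i) / 2 := by
        gcongr
    _ = ε ^ 2 * ∑ i, σ1 i * σ2 i := by ring
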